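/- Let A = ℂ[x_1, …, x_n] with n ≥ 2 and fix f_1, …, f_{n−2} ∈ A. Then the Nambu–Jacobi–Poisson bracket {F, G} := det Jac(F, G, f_1, …, f_{n−2}) makes A into a Poisson algebra: the bracket is bilinear, antisymmetric, satisfies the Leibniz rule {F·G, H} = F·{G,H} + {F,H}·G, and satisfies the Jacobi identity {{F,G},H} + {{G,H},F} + {{H,F},G} = 0. -/

import Mathlib

open MvPolynomial

/-- The Nambu–Jacobi–Poisson bracket on `ℂ[x₁, …, x_n]` determined by fixed
polynomials `f₁, …, f_{n−2}`: `{F, G} = det Jac(F, G, f₁, …, f_{n−2})`. -/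
noncomputable def njpBracket (n : ℕ) (f : Fin (n - 2) → MvPolynomial (Fin n) ℂ)
    (F G : MvPolynomial (Fin n) ℂ) : MvPolynomial (Fin n) ℂ :=
  (Matrix.of fun j k : Fin n =>
    pderiv k
      (if h0 : (j : ℕ) = 0 then F
       else if h1 : (j : ℕ) = 1 then G
       else f ⟨(j : ℕ) - 2, by omega⟩)).det


section DetLemmas

variable {ι : Type*} [Fintype ι] [DecidableEq ι] {S : Type*} [CommRing S]

lemma my_updateRow_comm (A : Matrix ι ι S) {i j : ι} (hij : i ≠ j) (u v : ι → S) :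
    (A.updateRow i u).updateRow j v = (A.updateRow j v).updateRow i u := by
  ext a b
  rcases eq_or_ne a i with rfl | hai
  · rw [Matrix.updateRow_ne hij, Matrix.updateRow_self, Matrix.updateRow_self]
  · rcases eq_or_ne a j with rfl | haj
    · rw [Matrix.updateRow_self, Matrix.updateRow_ne (Ne.symm hij), Matrix.updateRow_self]
    · rw [Matrix.updateRow_ne haj, Matrix.updateRow_ne hai, Matrix.updateRow_ne hai,
        Matrix.updateRow_ne haj]

lemma my_updateRow_idem (A : Matrix ι ι S) (i : ι) (u v : ι → S) :
    (A.updateRow i u).updateRow i v = A.updateRow i v := by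
  ext a b
  rcases eq_or_ne a i with rfl | hai
  · rw [Matrix.updateRow_self, Matrix.updateRow_self]
  · rw [Matrix.updateRow_ne hai, Matrix.updateRow_ne hai, Matrix.updateRow_ne hai]

lemma det_updateRow_expand (A : Matrix ι ι S) (p : ι) (u : ι → S) :
    (A.updateRow p u).det = ∑ k, u k * (A.updateRow p (Pi.single k 1)).det := by
  have key : ∀ s : Finset ι,
      (A.updateRow p (∑ k ∈ s, u k • (Pi.single k 1 : ι → S))).det
        = ∑ k ∈ s, u k * (A.updateRow p (Pi.single k 1)).det := by
    intro s
    induction s using Finset.induction_on with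
    | empty =>
        simp only [Finset.sum_empty]
        exact Matrix.det_eq_zero_of_row_eq_zero p (fun j => by simp)
    | @insert a s ha ih =>
        rw [Finset.sum_insert ha, Matrix.det_updateRow_add, Matrix.det_updateRow_smul,
          Finset.sum_insert ha, ih]
  have hu : u = ∑ k : ι, u k • (Pi.single k 1 : ι → S) := by
    funext j
    rw [Finset.sum_apply]
    have : ∀ k : ι, (u k • (Pi.single k 1 : ι → S)) j = if j = k then u k else 0 := by
      intro k
      simp only [Pi.smul_apply, Pi.single_apply, smul_eq_mul, mul_ite, mul_one, mul_zero]
    simp only [this, Finset.sum_ite_eq, Finset.mem_univ, if_true]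
  conv_lhs => rw [hu]
  exact key Finset.univ

end DetLemmas
section DerivDet

variable {ι : Type*} [Fintype ι] [DecidableEq ι] {S : Type*} [CommRing S] [Algebra ℂ S]

lemma derivation_finset_prod (D : Derivation ℂ S S) (s : Finset ι) (g : ι → S) :
    D (∏ i ∈ s, g i) = ∑ i ∈ s, (∏ j ∈ s.erase i, g j) * D (g i) := by
  induction s using Finset.induction_on with
  | empty => simp
  | @insert a s ha ih =>
      rw [Finset.prod_insert ha, D.leibniz, smul_eq_mul, smul_eq_mul, ih, Finset.mul_sum,
        Finset.sum_insert ha, Finset.erase_insert ha]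
      have hcg : ∀ i ∈ s, g a * ((∏ j ∈ s.erase i, g j) * D (g i))
          = (∏ j ∈ (insert a s).erase i, g j) * D (g i) := by
        intro i hi
        have hai : a ≠ i := fun h => ha (h ▸ hi)
        rw [Finset.erase_insert_of_ne hai,
          Finset.prod_insert (fun h => ha (Finset.mem_of_mem_erase h))]
        ring
      rw [Finset.sum_congr rfl hcg]
      ring

lemma derivation_intCast_mul (D : Derivation ℂ S S) (z : ℤ) (x : S) :
    D ((z : S) * x) = (z : S) * D x := by
  have h : ((z : S)) = algebraMap ℂ S (z : ℂ) := (map_intCast (algebraMap ℂ S) z).symm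
  rw [h, D.leibniz, Derivation.map_algebraMap]
  simp [smul_eq_mul, mul_comm]

lemma derivation_det (D : Derivation ℂ S S) (A : Matrix ι ι S) :
    D A.det = ∑ p, (A.updateRow p (fun k => D (A p k))).det := by
  classical
  rw [Matrix.det_apply', map_sum]
  have key : ∀ σ : Equiv.Perm ι,
      D ((((Equiv.Perm.sign σ : ℤ) : S)) * ∏ i, A (σ i) i)
        = ∑ p, (((Equiv.Perm.sign σ : ℤ) : S))
            * (D (A p (σ.symm p)) * ∏ i ∈ Finset.univ.erase (σ.symm p), A (σ i) i) := by
    intro σ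
    rw [derivation_intCast_mul, derivation_finset_prod, Finset.mul_sum]
    rw [← Equiv.sum_comp σ.symm
      (fun i => (((Equiv.Perm.sign σ : ℤ) : S))
        * ((∏ j ∈ Finset.univ.erase i, A (σ j) j) * D (A (σ i) i)))]
    refine Finset.sum_congr rfl fun p _ => ?_
    simp only [Equiv.apply_symm_apply]
    ring
  calc ∑ σ : Equiv.Perm ι, D ((((Equiv.Perm.sign σ : ℤ) : S)) * ∏ i, A (σ i) i)
      = ∑ σ : Equiv.Perm ι, ∑ p, (((Equiv.Perm.sign σ : ℤ) : S))
          * (D (A p (σ.symm p)) * ∏ i ∈ Finset.univ.erase (σ.symm p), A (σ i) i) :=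
        Finset.sum_congr rfl fun σ _ => key σ
    _ = ∑ p, ∑ σ : Equiv.Perm ι, (((Equiv.Perm.sign σ : ℤ) : S))
          * (D (A p (σ.symm p)) * ∏ i ∈ Finset.univ.erase (σ.symm p), A (σ i) i) :=
        Finset.sum_comm
    _ = ∑ p, (A.updateRow p (fun k => D (A p k))).det := by
        refine Finset.sum_congr rfl fun p _ => ?_
        rw [Matrix.det_apply']
        refine Finset.sum_congr rfl fun σ _ => ?_
        congr 1
        rw [← Finset.mul_prod_erase Finset.univ
          (fun i => (A.updateRow p (fun k => D (A p k))) (σ i) i) (Finset.mem_univ (σ.symm p))]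
        congr 1
        · rw [Equiv.apply_symm_apply, Matrix.updateRow_self]
        · refine Finset.prod_congr rfl fun i hi => ?_
          have hne : σ i ≠ p := fun h => (Finset.mem_erase.mp hi).1
            (by rw [← h, Equiv.symm_apply_apply])
          rw [Matrix.updateRow_ne hne]

lemma cramer_row {S' : Type*} [CommRing S'] (A : Matrix ι ι S') (v : ι → S') (k : ι) :
    ∑ p, (A.updateRow p v).det * A p k = A.det * v k := by
  have h := congrFun (Matrix.mulVec_cramer A.transpose v) k
  simp only [Matrix.mulVec, dotProduct, Matrix.cramer_transpose_apply,
    Matrix.transpose_apply, Matrix.det_transpose, Pi.smul_apply, smul_eq_mul] at h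
  rw [← h]
  refine Finset.sum_congr rfl fun p _ => mul_comm _ _

end DerivDet
section Kdet

variable {ι : Type*} [Fintype ι] [DecidableEq ι] {S : Type*} [CommRing S]

/-- Determinant of the matrix `A` with rows `i0`, `i1` replaced by `a`, `b`. -/
def Kdet (A : Matrix ι ι S) (i0 i1 : ι) (a b : ι → S) : S :=
  ((A.updateRow i0 a).updateRow i1 b).det

lemma kdet_swap (A : Matrix ι ι S) {i0 i1 : ι} (h01 : i0 ≠ i1) (a b : ι → S) :
    Kdet A i0 i1 a b = - Kdet A i0 i1 b a := by
  have hM : (A.updateRow i0 a).updateRow i1 b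
      = ((A.updateRow i0 b).updateRow i1 a).submatrix (Equiv.swap i0 i1) id := by
    ext x y
    simp only [Matrix.submatrix_apply, id_eq, Matrix.updateRow_apply, Equiv.swap_apply_def]
    split_ifs <;> simp_all
  rw [Kdet, Kdet, hM, Matrix.det_permute, Equiv.Perm.sign_swap h01]
  push_cast
  ring

lemma kdet_add_right (A : Matrix ι ι S) (i0 i1 : ι) (a u v : ι → S) :
    Kdet A i0 i1 a (u + v) = Kdet A i0 i1 a u + Kdet A i0 i1 a v :=
  Matrix.det_updateRow_add _ _ _ _

lemma kdet_smul_right (A : Matrix ι ι S) (i0 i1 : ι) (a : ι → S) (s : S) (u : ι → S) :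
    Kdet A i0 i1 a (s • u) = s * Kdet A i0 i1 a u :=
  Matrix.det_updateRow_smul _ _ _ _

lemma kdet_add_left (A : Matrix ι ι S) {i0 i1 : ι} (h01 : i0 ≠ i1) (u v b : ι → S) :
    Kdet A i0 i1 (u + v) b = Kdet A i0 i1 u b + Kdet A i0 i1 v b := by
  unfold Kdet
  rw [my_updateRow_comm _ h01, my_updateRow_comm _ h01 u, my_updateRow_comm _ h01 v,
    Matrix.det_updateRow_add]

lemma kdet_smul_left (A : Matrix ι ι S) {i0 i1 : ι} (h01 : i0 ≠ i1) (s : S) (u b : ι → S) :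
    Kdet A i0 i1 (s • u) b = s * Kdet A i0 i1 u b := by
  unfold Kdet
  rw [my_updateRow_comm _ h01, my_updateRow_comm _ h01 u, Matrix.det_updateRow_smul]

/-- Expansion of the `i1`-row in the standard basis. -/
lemma kdet_expand_right (A : Matrix ι ι S) (i0 i1 : ι) (a b : ι → S) :
    Kdet A i0 i1 a b = ∑ k, b k * Kdet A i0 i1 a (Pi.single k 1) :=
  det_updateRow_expand _ _ _

/-- The three-term Plücker relation for determinants sharing all but two rows. -/
lemma kdet_plucker (A : Matrix ι ι S) {i0 i1 : ι} (h01 : i0 ≠ i1) (a b c d : ι → S) :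
    Kdet A i0 i1 a b * Kdet A i0 i1 d c + Kdet A i0 i1 b c * Kdet A i0 i1 d a
      + Kdet A i0 i1 c a * Kdet A i0 i1 d b = 0 := by
  set A' : Matrix ι ι S := (A.updateRow i0 b).updateRow i1 c with hA'
  have hrow0 : A' i0 = b := by
    rw [hA', Matrix.updateRow_ne h01, Matrix.updateRow_self]
  have hrow1 : A' i1 = c := by rw [hA', Matrix.updateRow_self]
  have hup0 : A'.updateRow i0 a = (A.updateRow i0 a).updateRow i1 c := by
    rw [hA', my_updateRow_comm _ h01, my_updateRow_idem, my_updateRow_comm _ (Ne.symm h01)]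
  have hup1 : A'.updateRow i1 a = (A.updateRow i0 b).updateRow i1 a := by
    rw [hA', my_updateRow_idem]
  have main : ∀ k, ∑ p, (A'.updateRow p a).det * A' p k = A'.det * a k :=
    fun k => cramer_row A' a k
  have hsum : ∑ p, (A'.updateRow p a).det * Kdet A i0 i1 d (A' p)
      = Kdet A i0 i1 b c * Kdet A i0 i1 d a := by
    calc ∑ p, (A'.updateRow p a).det * Kdet A i0 i1 d (A' p)
        = ∑ p, (A'.updateRow p a).det * ∑ k, A' p k * Kdet A i0 i1 d (Pi.single k 1) := by
          refine Finset.sum_congr rfl fun p _ => ?_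
          rw [kdet_expand_right A i0 i1 d (A' p)]
      _ = ∑ p, ∑ k, (A'.updateRow p a).det * A' p k * Kdet A i0 i1 d (Pi.single k 1) := by
          refine Finset.sum_congr rfl fun p _ => ?_
          rw [Finset.mul_sum]
          refine Finset.sum_congr rfl fun k _ => by ring
      _ = ∑ k, (∑ p, (A'.updateRow p a).det * A' p k) * Kdet A i0 i1 d (Pi.single k 1) := by
          rw [Finset.sum_comm]
          refine Finset.sum_congr rfl fun k _ => ?_
          rw [Finset.sum_mul]
      _ = ∑ k, A'.det * (a k * Kdet A i0 i1 d (Pi.single k 1)) := by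
          refine Finset.sum_congr rfl fun k _ => ?_
          rw [main k]; ring
      _ = A'.det * ∑ k, a k * Kdet A i0 i1 d (Pi.single k 1) := by rw [Finset.mul_sum]
      _ = Kdet A i0 i1 b c * Kdet A i0 i1 d a := by
          rw [← kdet_expand_right A i0 i1 d a]; rfl
  have hzero : ∀ p, p ≠ i0 → p ≠ i1 → Kdet A i0 i1 d (A' p) = 0 := by
    intro p hp0 hp1
    have hApr : A' p = A p := by
      rw [hA', Matrix.updateRow_ne hp1, Matrix.updateRow_ne hp0]
    refine Matrix.det_zero_of_row_eq (Ne.symm hp1) ?_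
    rw [Matrix.updateRow_self, Matrix.updateRow_ne hp1, Matrix.updateRow_ne hp0, hApr]
  have hsplit : ∑ p, (A'.updateRow p a).det * Kdet A i0 i1 d (A' p)
      = (A'.updateRow i0 a).det * Kdet A i0 i1 d (A' i0)
        + (A'.updateRow i1 a).det * Kdet A i0 i1 d (A' i1) := by
    have hsub : ∑ p, (A'.updateRow p a).det * Kdet A i0 i1 d (A' p)
        = ∑ p ∈ ({i0, i1} : Finset ι), (A'.updateRow p a).det * Kdet A i0 i1 d (A' p) := by
      refine (Finset.sum_subset (Finset.subset_univ _) ?_).symm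
      intro p _ hp
      simp only [Finset.mem_insert, Finset.mem_singleton, not_or] at hp
      rw [hzero p hp.1 hp.2, mul_zero]
    rw [hsub, Finset.sum_pair h01]
  have key : Kdet A i0 i1 a c * Kdet A i0 i1 d b + Kdet A i0 i1 b a * Kdet A i0 i1 d c
      = Kdet A i0 i1 b c * Kdet A i0 i1 d a := by
    rw [← hsum, hsplit, hrow0, hrow1, hup0, hup1]
    rfl
  have s1 : Kdet A i0 i1 c a = - Kdet A i0 i1 a c := kdet_swap A h01 c a
  have s2 : Kdet A i0 i1 a b = - Kdet A i0 i1 b a := kdet_swap A h01 a b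
  rw [s1, s2]
  linear_combination - key

end Kdet
section Jacobi

variable {ι : Type*} [Fintype ι] [DecidableEq ι] {S : Type*} [CommRing S] [Algebra ℂ S]

/-- symmetric × antisymmetric double sums vanish -/
lemma sum_symm_cancel (W G : ι → ι → S) (hW : ∀ m l, W m l = W l m)
    (hG : ∀ m l, G m l + G l m = 0) : ∑ m, ∑ l, W m l * G m l = 0 := by
  have hswap : ∑ m, ∑ l, W m l * G m l = ∑ m, ∑ l, W m l * (- G m l) := by
    rw [Finset.sum_comm]
    refine Finset.sum_congr rfl fun m _ => Finset.sum_congr rfl fun l _ => ?_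
    rw [hW l m, eq_neg_of_add_eq_zero_left (hG l m)]
  have h2 : (∑ m, ∑ l, W m l * G m l) + (∑ m, ∑ l, W m l * G m l) = 0 := by
    nth_rewrite 2 [hswap]
    rw [← Finset.sum_add_distrib]
    refine Finset.sum_eq_zero fun m _ => ?_
    rw [← Finset.sum_add_distrib]
    refine Finset.sum_eq_zero fun l _ => by ring
  calc ∑ m, ∑ l, W m l * G m l
      = (2 : ℂ)⁻¹ • ((2 : ℂ) • ∑ m, ∑ l, W m l * G m l) := by
        rw [smul_smul]; norm_num
    _ = (2 : ℂ)⁻¹ • ((∑ m, ∑ l, W m l * G m l) + ∑ m, ∑ l, W m l * G m l) := by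
        rw [two_smul]
    _ = 0 := by rw [h2, smul_zero]

variable (d : ι → Derivation ℂ S S) (B : Matrix ι ι S) (i0 i1 : ι)

/-- The generalized Nambu--Jacobi--Poisson bracket. -/
def gbr (F G : S) : S := Kdet B i0 i1 (fun k => d k F) (fun k => d k G)

/-- One term of the expansion of the iterated bracket. -/
noncomputable def Tterm (F G H : S) (p : ι) : S :=
  ∑ m, ∑ l,
    d m (((B.updateRow i0 (fun k => d k F)).updateRow i1 (fun k => d k G)) p l)
      * (((B.updateRow i0 (fun k => d k F)).updateRow i1 (fun k => d k G)).updateRow p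
          (Pi.single l 1)).det
      * Kdet B i0 i1 (Pi.single m 1) (fun k => d k H)

lemma gbr_iter_expand (h01 : i0 ≠ i1) (F G H : S) :
    gbr d B i0 i1 (gbr d B i0 i1 F G) H = ∑ p, Tterm d B i0 i1 F G H p := by
  classical
  set N : Matrix ι ι S :=
    (B.updateRow i0 (fun k => d k F)).updateRow i1 (fun k => d k G) with hN
  have h1 : gbr d B i0 i1 (gbr d B i0 i1 F G) H
      = ∑ m, d m N.det * Kdet B i0 i1 (Pi.single m 1) (fun k => d k H) := by
    show Kdet B i0 i1 (fun k => d k N.det) (fun k => d k H) = _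
    unfold Kdet
    rw [my_updateRow_comm _ h01, det_updateRow_expand _ i0]
    refine Finset.sum_congr rfl fun m _ => ?_
    rw [my_updateRow_comm B (Ne.symm h01)]
  have h2 : ∀ m, d m N.det = ∑ p, ∑ l, d m (N p l) * (N.updateRow p (Pi.single l 1)).det := by
    intro m
    rw [derivation_det (d m) N]
    exact Finset.sum_congr rfl fun p _ => det_updateRow_expand _ _ _
  rw [h1]
  calc ∑ m, d m N.det * Kdet B i0 i1 (Pi.single m 1) (fun k => d k H)
      = ∑ m, ∑ p, ∑ l, d m (N p l) * (N.updateRow p (Pi.single l 1)).det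
          * Kdet B i0 i1 (Pi.single m 1) (fun k => d k H) := by
        refine Finset.sum_congr rfl fun m _ => ?_
        rw [h2 m, Finset.sum_mul]
        refine Finset.sum_congr rfl fun p _ => ?_
        rw [Finset.sum_mul]
    _ = ∑ p, Tterm d B i0 i1 F G H p := by
        rw [Finset.sum_comm]
        exact Finset.sum_congr rfl fun p _ => rfl

/-- The pair of terms carrying second derivatives of `F` cancels. -/
lemma Tterm_pair (h01 : i0 ≠ i1) (hd : ∀ m l (x : S), d m (d l x) = d l (d m x))
    (F G H : S) :
    Tterm d B i0 i1 F G H i0 + Tterm d B i0 i1 H F G i1 = 0 := by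
  classical
  have e1 : Tterm d B i0 i1 F G H i0
      = ∑ m, ∑ l, d m (d l F)
          * (Kdet B i0 i1 (Pi.single l 1) (fun k => d k G)
            * Kdet B i0 i1 (Pi.single m 1) (fun k => d k H)) := by
    unfold Tterm
    refine Finset.sum_congr rfl fun m _ => Finset.sum_congr rfl fun l _ => ?_
    have hrow : ((B.updateRow i0 (fun k => d k F)).updateRow i1 (fun k => d k G)) i0 l
        = d l F := by
      rw [Matrix.updateRow_ne h01, Matrix.updateRow_self]
    have hC : (((B.updateRow i0 (fun k => d k F)).updateRow i1 (fun k => d k G)).updateRow i0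
          (Pi.single l 1)).det
        = Kdet B i0 i1 (Pi.single l 1) (fun k => d k G) := by
      rw [my_updateRow_comm _ (Ne.symm h01), my_updateRow_idem]
      rfl
    rw [hrow, hC]
    ring
  have e2 : Tterm d B i0 i1 H F G i1
      = ∑ m, ∑ l, d m (d l F)
          * (-(Kdet B i0 i1 (Pi.single l 1) (fun k => d k H)
            * Kdet B i0 i1 (Pi.single m 1) (fun k => d k G))) := by
    unfold Tterm
    refine Finset.sum_congr rfl fun m _ => Finset.sum_congr rfl fun l _ => ?_
    have hrow : ((B.updateRow i0 (fun k => d k H)).updateRow i1 (fun k => d k F)) i1 l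
        = d l F := by
      rw [Matrix.updateRow_self]
    have hC : (((B.updateRow i0 (fun k => d k H)).updateRow i1 (fun k => d k F)).updateRow i1
          (Pi.single l 1)).det
        = Kdet B i0 i1 (fun k => d k H) (Pi.single l 1) := by
      rw [my_updateRow_idem]
      rfl
    rw [hrow, hC, kdet_swap B h01]
    ring
  have key : Tterm d B i0 i1 F G H i0 + Tterm d B i0 i1 H F G i1
      = ∑ m, ∑ l, d m (d l F)
          * (Kdet B i0 i1 (Pi.single l 1) (fun k => d k G)
              * Kdet B i0 i1 (Pi.single m 1) (fun k => d k H)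
            - Kdet B i0 i1 (Pi.single l 1) (fun k => d k H)
              * Kdet B i0 i1 (Pi.single m 1) (fun k => d k G)) := by
    rw [e1, e2, ← Finset.sum_add_distrib]
    refine Finset.sum_congr rfl fun m _ => ?_
    rw [← Finset.sum_add_distrib]
    exact Finset.sum_congr rfl fun l _ => by ring
  rw [key]
  exact sum_symm_cancel _ _ (fun m l => hd m l F) (fun m l => by ring)

end Jacobi
section Jacobi2

variable {ι : Type*} [Fintype ι] [DecidableEq ι] {S : Type*} [CommRing S] [Algebra ℂ S]
variable (B : Matrix ι ι S) {i0 i1 : ι}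

lemma kdet_updateRow_add {p : ι} (hp0 : p ≠ i0) (hp1 : p ≠ i1) (u v x y : ι → S) :
    Kdet (B.updateRow p (u + v)) i0 i1 x y
      = Kdet (B.updateRow p u) i0 i1 x y + Kdet (B.updateRow p v) i0 i1 x y := by
  unfold Kdet
  rw [my_updateRow_comm _ hp0 (u + v) x, my_updateRow_comm _ hp1 (u + v) y,
    my_updateRow_comm _ hp0 u x, my_updateRow_comm _ hp1 u y,
    my_updateRow_comm _ hp0 v x, my_updateRow_comm _ hp1 v y,
    Matrix.det_updateRow_add]

/-- Swapping a standard row into position `i0` changes the sign. -/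
lemma E_swap (h01 : i0 ≠ i1) {p : ι} (hp0 : p ≠ i0) (hp1 : p ≠ i1) (w c : ι → S) :
    Kdet B i0 i1 w c = - Kdet (B.updateRow p w) i0 i1 (B p) c := by
  have hM : (B.updateRow i0 w).updateRow i1 c
      = (((B.updateRow p w).updateRow i0 (B p)).updateRow i1 c).submatrix
          (Equiv.swap i0 p) id := by
    ext x y
    simp only [Matrix.submatrix_apply, id_eq, Matrix.updateRow_apply, Equiv.swap_apply_def]
    split_ifs <;> simp_all
  rw [Kdet, Kdet, hM, Matrix.det_permute, Equiv.Perm.sign_swap (Ne.symm hp0)]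
  push_cast
  ring

/-- The cyclic Plücker-type cancellation, polarized. -/
lemma phi_anti (h01 : i0 ≠ i1) {p : ι} (hp0 : p ≠ i0) (hp1 : p ≠ i1)
    (a b c : ι → S) (u v : ι → S) :
    (Kdet (B.updateRow p u) i0 i1 a b * Kdet (B.updateRow p v) i0 i1 (B p) c
      + Kdet (B.updateRow p u) i0 i1 b c * Kdet (B.updateRow p v) i0 i1 (B p) a
      + Kdet (B.updateRow p u) i0 i1 c a * Kdet (B.updateRow p v) i0 i1 (B p) b)
    + (Kdet (B.updateRow p v) i0 i1 a b * Kdet (B.updateRow p u) i0 i1 (B p) c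
      + Kdet (B.updateRow p v) i0 i1 b c * Kdet (B.updateRow p u) i0 i1 (B p) a
      + Kdet (B.updateRow p v) i0 i1 c a * Kdet (B.updateRow p u) i0 i1 (B p) b) = 0 := by
  have hdiag : ∀ w : ι → S,
      Kdet (B.updateRow p w) i0 i1 a b * Kdet (B.updateRow p w) i0 i1 (B p) c
        + Kdet (B.updateRow p w) i0 i1 b c * Kdet (B.updateRow p w) i0 i1 (B p) a
        + Kdet (B.updateRow p w) i0 i1 c a * Kdet (B.updateRow p w) i0 i1 (B p) b = 0 :=
    fun w => kdet_plucker (B.updateRow p w) h01 a b c (B p)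
  have h1 := hdiag u
  have h2 := hdiag v
  have h3 := hdiag (u + v)
  simp only [kdet_updateRow_add B hp0 hp1] at h3
  linear_combination h3 - h1 - h2

variable (d : ι → Derivation ℂ S S)

lemma Tterm_rest (h01 : i0 ≠ i1)
    (hB : ∀ p m l, d m (B p l) = d l (B p m))
    {p : ι} (hp0 : p ≠ i0) (hp1 : p ≠ i1) (F G H : S) :
    Tterm d B i0 i1 F G H p + Tterm d B i0 i1 G H F p + Tterm d B i0 i1 H F G p = 0 := by
  classical
  have erow : ∀ (X Y : S) (l : ι),
      ((B.updateRow i0 (fun k => d k X)).updateRow i1 (fun k => d k Y)) p l = B p l := by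
    intro X Y l
    rw [Matrix.updateRow_ne hp1, Matrix.updateRow_ne hp0]
  have eC : ∀ (X Y : S) (l : ι),
      (((B.updateRow i0 (fun k => d k X)).updateRow i1 (fun k => d k Y)).updateRow p
          (Pi.single l 1)).det
        = Kdet (B.updateRow p (Pi.single l 1)) i0 i1 (fun k => d k X) (fun k => d k Y) := by
    intro X Y l
    rw [my_updateRow_comm _ (Ne.symm hp1), my_updateRow_comm _ (Ne.symm hp0)]
    rfl
  have eT : ∀ (X Y Z : S), Tterm d B i0 i1 X Y Z p
      = ∑ m, ∑ l, d m (B p l)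
          * (- (Kdet (B.updateRow p (Pi.single l 1)) i0 i1 (fun k => d k X) (fun k => d k Y)
              * Kdet (B.updateRow p (Pi.single m 1)) i0 i1 (B p) (fun k => d k Z))) := by
    intro X Y Z
    unfold Tterm
    refine Finset.sum_congr rfl fun m _ => Finset.sum_congr rfl fun l _ => ?_
    rw [erow X Y l, eC X Y l, E_swap B h01 hp0 hp1 (Pi.single m 1) (fun k => d k Z)]
    ring
  have key : Tterm d B i0 i1 F G H p + Tterm d B i0 i1 G H F p + Tterm d B i0 i1 H F G p
      = ∑ m, ∑ l, d m (B p l)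
          * (- (Kdet (B.updateRow p (Pi.single l 1)) i0 i1 (fun k => d k F) (fun k => d k G)
                * Kdet (B.updateRow p (Pi.single m 1)) i0 i1 (B p) (fun k => d k H)
              + Kdet (B.updateRow p (Pi.single l 1)) i0 i1 (fun k => d k G) (fun k => d k H)
                * Kdet (B.updateRow p (Pi.single m 1)) i0 i1 (B p) (fun k => d k F)
              + Kdet (B.updateRow p (Pi.single l 1)) i0 i1 (fun k => d k H) (fun k => d k F)
                * Kdet (B.updateRow p (Pi.single m 1)) i0 i1 (B p) (fun k => d k G))) := by
    rw [eT F G H, eT G H F, eT H F G, ← Finset.sum_add_distrib, ← Finset.sum_add_distrib]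
    refine Finset.sum_congr rfl fun m _ => ?_
    rw [← Finset.sum_add_distrib, ← Finset.sum_add_distrib]
    exact Finset.sum_congr rfl fun l _ => by ring
  rw [key]
  refine sum_symm_cancel _ _ (fun m l => hB p m l) (fun m l => ?_)
  have := phi_anti B h01 hp0 hp1 (fun k => d k F) (fun k => d k G) (fun k => d k H)
    (Pi.single l 1) (Pi.single m 1)
  linear_combination - this

/-- Jacobi identity for the generalized bracket. -/
theorem gbr_jacobi (h01 : i0 ≠ i1)
    (hd : ∀ m l (x : S), d m (d l x) = d l (d m x))
    (hB : ∀ p m l, d m (B p l) = d l (B p m)) (F G H : S) :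
    gbr d B i0 i1 (gbr d B i0 i1 F G) H + gbr d B i0 i1 (gbr d B i0 i1 G H) F
      + gbr d B i0 i1 (gbr d B i0 i1 H F) G = 0 := by
  classical
  rw [gbr_iter_expand d B i0 i1 h01 F G H, gbr_iter_expand d B i0 i1 h01 G H F,
    gbr_iter_expand d B i0 i1 h01 H F G, ← Finset.sum_add_distrib, ← Finset.sum_add_distrib]
  have hsplit : ∀ Φ : ι → S,
      ∑ q, Φ q = Φ i0 + (Φ i1 + ∑ q ∈ (Finset.univ.erase i0).erase i1, Φ q) := by
    intro Φ
    rw [← Finset.add_sum_erase _ Φ (Finset.mem_univ i0)]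
    congr 1
    rw [← Finset.add_sum_erase _ Φ (Finset.mem_erase.mpr ⟨Ne.symm h01, Finset.mem_univ i1⟩)]
  rw [hsplit]
  have hrest : ∑ q ∈ (Finset.univ.erase i0).erase i1,
      (Tterm d B i0 i1 F G H q + Tterm d B i0 i1 G H F q + Tterm d B i0 i1 H F G q) = 0 := by
    refine Finset.sum_eq_zero fun q hq => ?_
    have hq1 : q ≠ i1 := (Finset.mem_erase.mp hq).1
    have hq0 : q ≠ i0 := (Finset.mem_erase.mp (Finset.mem_erase.mp hq).2).1
    exact Tterm_rest B d h01 hB hq0 hq1 F G H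
  have p1 := Tterm_pair d B i0 i1 h01 hd F G H
  have p2 := Tterm_pair d B i0 i1 h01 hd G H F
  have p3 := Tterm_pair d B i0 i1 h01 hd H F G
  rw [hrest]
  linear_combination p1 + p2 + p3

end Jacobi2
section Specific

lemma my_pderiv_comm {n : ℕ} (m l : Fin n) (F : MvPolynomial (Fin n) ℂ) :
    pderiv m (pderiv l F) = pderiv l (pderiv m F) := by
  induction F using MvPolynomial.induction_on' with
  | add p q hp hq => simp [map_add, hp, hq]
  | monomial s a =>
      rcases eq_or_ne m l with rfl | hml
      · rfl
      · simp only [pderiv_monomial]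
        have h1 : ((s - Finsupp.single l 1 : Fin n →₀ ℕ)) m = s m := by
          rw [Finsupp.tsub_apply, Finsupp.single_eq_of_ne' (Ne.symm hml), tsub_zero]
        have h2 : ((s - Finsupp.single m 1 : Fin n →₀ ℕ)) l = s l := by
          rw [Finsupp.tsub_apply, Finsupp.single_eq_of_ne' hml, tsub_zero]
        rw [h1, h2]
        congr 1
        · rw [tsub_tsub, tsub_tsub, add_comm]
        · push_cast
          ring

/-- The matrix of gradients of the fixed polynomials (rows `0`, `1` are zero). -/
noncomputable def bmat (n : ℕ) (f : Fin (n - 2) → MvPolynomial (Fin n) ℂ) :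
    Matrix (Fin n) (Fin n) (MvPolynomial (Fin n) ℂ) :=
  Matrix.of fun j k =>
    pderiv k
      (if h : (j : ℕ) < 2 then 0 else f ⟨(j : ℕ) - 2, by have := j.isLt; omega⟩)

lemma njp_eq {n : ℕ} (hn : 2 ≤ n) (f : Fin (n - 2) → MvPolynomial (Fin n) ℂ)
    (F G : MvPolynomial (Fin n) ℂ) :
    njpBracket n f F G
      = gbr (fun k => pderiv k) (bmat n f) (⟨0, by omega⟩ : Fin n) (⟨1, by omega⟩ : Fin n)
          F G := by
  unfold njpBracket gbr Kdet
  congr 1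
  ext j k
  rcases j with ⟨jv, hj⟩
  by_cases h0 : jv = 0
  · subst h0
    have ne1 : (⟨0, hj⟩ : Fin n) ≠ ⟨1, by omega⟩ := by simp [Fin.ext_iff]
    rw [Matrix.of_apply, dif_pos rfl, Matrix.updateRow_ne ne1, Matrix.updateRow_self]
  · by_cases h1 : jv = 1
    · subst h1
      rw [Matrix.of_apply, dif_neg (show ¬((1:ℕ) = 0) by omega), dif_pos rfl, Matrix.updateRow_self]
    · have ne1 : (⟨jv, hj⟩ : Fin n) ≠ ⟨1, by omega⟩ := by simp [Fin.ext_iff]; omega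
      have ne0 : (⟨jv, hj⟩ : Fin n) ≠ ⟨0, by omega⟩ := by simp [Fin.ext_iff]; omega
      rw [Matrix.of_apply, dif_neg (by simpa using h0), dif_neg (by simpa using h1),
        Matrix.updateRow_ne ne1, Matrix.updateRow_ne ne0, bmat, Matrix.of_apply,
        dif_neg (by simp; omega)]

end Specific

/-- The Nambu–Jacobi–Poisson bracket makes `ℂ[x₁, …, x_n]` (with `n ≥ 2`) a Poisson
algebra: it is `ℂ`-bilinear, antisymmetric, satisfies the Leibniz rule, and satisfies
the Jacobi identity. -/
theorem njpBracket_poisson (n : ℕ) (hn : 2 ≤ n)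
    (f : Fin (n - 2) → MvPolynomial (Fin n) ℂ) :
    (∀ (c : ℂ) (F F' G : MvPolynomial (Fin n) ℂ),
        njpBracket n f (c • F + F') G = c • njpBracket n f F G + njpBracket n f F' G) ∧
    (∀ (c : ℂ) (F G G' : MvPolynomial (Fin n) ℂ),
        njpBracket n f F (c • G + G') = c • njpBracket n f F G + njpBracket n f F G') ∧
    (∀ F G : MvPolynomial (Fin n) ℂ, njpBracket n f F G = - njpBracket n f G F) ∧
    (∀ F G H : MvPolynomial (Fin n) ℂ,
        njpBracket n f (F * G) H = F * njpBracket n f G H + njpBracket n f F H * G) ∧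
    (∀ F G H : MvPolynomial (Fin n) ℂ,
        njpBracket n f (njpBracket n f F G) H + njpBracket n f (njpBracket n f G H) F +
          njpBracket n f (njpBracket n f H F) G = 0) := by
  have h01 : (⟨0, by omega⟩ : Fin n) ≠ (⟨1, by omega⟩ : Fin n) := by simp [Fin.ext_iff]
  have heq : ∀ F G : MvPolynomial (Fin n) ℂ, njpBracket n f F G
      = gbr (fun k => pderiv k) (bmat n f) (⟨0, by omega⟩ : Fin n) (⟨1, by omega⟩ : Fin n)
          F G := fun F G => njp_eq hn f F G
  refine ⟨?_, ?_, ?_, ?_, ?_⟩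
  · intro c F F' G
    rw [heq, heq, heq]
    unfold gbr
    have hrow : (fun k : Fin n => pderiv k (c • F + F'))
        = (C c : MvPolynomial (Fin n) ℂ) • (fun k => pderiv k F) + fun k => pderiv k F' := by
      funext k
      simp only [map_add, Derivation.map_smul, Pi.add_apply, Pi.smul_apply, smul_eq_mul,
        smul_eq_C_mul, pderiv_C_mul]
    rw [hrow, kdet_add_left _ h01, kdet_smul_left _ h01, smul_eq_C_mul]
  · intro c F G G'
    rw [heq, heq, heq]
    unfold gbr
    have hrow : (fun k : Fin n => pderiv k (c • G + G'))
        = (C c : MvPolynomial (Fin n) ℂ) • (fun k => pderiv k G) + fun k => pderiv k G' := by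
      funext k
      simp only [map_add, Derivation.map_smul, Pi.add_apply, Pi.smul_apply, smul_eq_mul,
        smul_eq_C_mul, pderiv_C_mul]
    rw [hrow, kdet_add_right, kdet_smul_right, smul_eq_C_mul]
  · intro F G
    rw [heq, heq]
    unfold gbr
    exact kdet_swap _ h01 _ _
  · intro F G H
    rw [heq, heq, heq]
    unfold gbr
    have hrow : (fun k : Fin n => pderiv k (F * G))
        = F • (fun k => pderiv k G) + G • (fun k => pderiv k F) := by
      funext k
      simp only [pderiv_mul, Pi.add_apply, Pi.smul_apply, smul_eq_mul]
      ring
    rw [hrow, kdet_add_left _ h01, kdet_smul_left _ h01, kdet_smul_left _ h01]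
    ring
  · intro F G H
    simp only [heq]
    exact gbr_jacobi (bmat n f) (fun k => pderiv k) h01
      (fun m l x => my_pderiv_comm m l x)
      (fun p m l => my_pderiv_comm m l _) F G H
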